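/- Let Γ be a group and B ⊆ Γ a finite subset with |B·B⁻¹| < (3/2)|B|. Then both B·B⁻¹ and B⁻¹·B are subgroups of Γ. -/

import Mathlib

open Pointwise Finset

/-- Key representation lemma: every element of `B⁻¹ * B` has more than `|B|/2`
representations, in the sense that `|B ∩ Bk| > |B|/2`. -/
private lemma fh_key {Γ : Type*} [Group Γ] [DecidableEq Γ] (B : Finset Γ)
    (h : 2 * (B * B⁻¹).card < 3 * B.card) {k : Γ} (hk : k ∈ B⁻¹ * B) :
    B.card < 2 * (B ∩ B.image (· * k)).card := by
  rw [Finset.mem_mul] at hk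
  obtain ⟨u, hu, a, ha, rfl⟩ := hk
  rw [Finset.mem_inv] at hu
  obtain ⟨b, hb, rfl⟩ := hu
  set P := B.image (· * a⁻¹) with hP
  set Q := B.image (· * b⁻¹) with hQ
  have hPcard : P.card = B.card := Finset.card_image_of_injective _ (mul_left_injective _)
  have hQcard : Q.card = B.card := Finset.card_image_of_injective _ (mul_left_injective _)
  have hPsub : P ⊆ B * B⁻¹ := by
    intro x hx
    rw [hP, Finset.mem_image] at hx
    obtain ⟨y, hy, rfl⟩ := hx
    exact Finset.mul_mem_mul hy (Finset.inv_mem_inv ha)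
  have hQsub : Q ⊆ B * B⁻¹ := by
    intro x hx
    rw [hQ, Finset.mem_image] at hx
    obtain ⟨y, hy, rfl⟩ := hx
    exact Finset.mul_mem_mul hy (Finset.inv_mem_inv hb)
  have hunion : (P ∪ Q).card ≤ (B * B⁻¹).card :=
    Finset.card_le_card (Finset.union_subset hPsub hQsub)
  have hie : (P ∪ Q).card + (P ∩ Q).card = P.card + Q.card :=
    Finset.card_union_add_card_inter _ _
  have hinj : (P ∩ Q).card ≤ (B ∩ B.image (· * (b⁻¹ * a))).card := by
    apply Finset.card_le_card_of_injOn (fun z => z * a)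
    · intro z hz
      rw [Finset.mem_coe, Finset.mem_inter] at hz
      obtain ⟨hzP, hzQ⟩ := hz
      rw [hP, Finset.mem_image] at hzP
      obtain ⟨x, hx, hxz⟩ := hzP
      rw [hQ, Finset.mem_image] at hzQ
      obtain ⟨y, hy, hyz⟩ := hzQ
      rw [Finset.mem_coe, Finset.mem_inter]
      constructor
      · rw [← hxz]
        simpa using hx
      · rw [Finset.mem_image]
        refine ⟨y, hy, ?_⟩
        rw [← hyz]
        group
    · intro z _ w _ hzw
      exact mul_right_cancel hzw
  omega

/-- `B⁻¹ * B` is closed under division. -/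
private lemma fh_Kdiv {Γ : Type*} [Group Γ] [DecidableEq Γ] (B : Finset Γ)
    (h : 2 * (B * B⁻¹).card < 3 * B.card) {g k : Γ}
    (hg : g ∈ B⁻¹ * B) (hk : k ∈ B⁻¹ * B) : g * k⁻¹ ∈ B⁻¹ * B := by
  have hA := fh_key B h hg
  have hC := fh_key B h hk
  set A := B ∩ B.image (· * g) with hAdef
  set C := B ∩ B.image (· * k) with hCdef
  have h1 : (A ∪ C).card ≤ B.card :=
    Finset.card_le_card (Finset.union_subset Finset.inter_subset_left Finset.inter_subset_left)
  have h2 : (A ∪ C).card + (A ∩ C).card = A.card + C.card :=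
    Finset.card_union_add_card_inter _ _
  have h3 : 0 < (A ∩ C).card := by omega
  obtain ⟨z, hz⟩ := Finset.card_pos.mp h3
  rw [Finset.mem_inter] at hz
  obtain ⟨hzA, hzC⟩ := hz
  rw [hAdef, Finset.mem_inter, Finset.mem_image] at hzA
  obtain ⟨-, y, hy, hyz⟩ := hzA
  rw [hCdef, Finset.mem_inter, Finset.mem_image] at hzC
  obtain ⟨-, w, hw, hwz⟩ := hzC
  rw [Finset.mem_mul]
  refine ⟨y⁻¹, Finset.inv_mem_inv hy, w, hw, ?_⟩
  have hyw : y * g = w * k := by rw [hyz, hwz]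
  have : w = y * g * k⁻¹ := by rw [hyw]; group
  rw [this]; group

/-- `|B⁻¹ * B| < 2|B|` by double counting. -/
private lemma fh_Kcard {Γ : Type*} [Group Γ] [DecidableEq Γ] (B : Finset Γ)
    (hB : B.Nonempty) (h : 2 * (B * B⁻¹).card < 3 * B.card) :
    (B⁻¹ * B).card < 2 * B.card := by
  have hfib : ∀ k ∈ B⁻¹ * B,
      B.card + 1 ≤ 2 * ((B ×ˢ B).filter (fun p => p.2⁻¹ * p.1 = k)).card := by
    intro k hk
    have h1 := fh_key B h hk
    have h2 : (B ∩ B.image (· * k)).card ≤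
        ((B ×ˢ B).filter (fun p => p.2⁻¹ * p.1 = k)).card := by
      apply Finset.card_le_card_of_injOn (fun x => (x, x * k⁻¹))
      · intro x hx
        rw [Finset.mem_coe, Finset.mem_inter] at hx
        obtain ⟨hxB, hxim⟩ := hx
        rw [Finset.mem_image] at hxim
        obtain ⟨y, hy, rfl⟩ := hxim
        rw [Finset.mem_coe, Finset.mem_filter, Finset.mem_product]
        refine ⟨⟨hxB, by simpa using hy⟩, ?_⟩
        group
      · intro x _ y _ hxy
        exact congrArg Prod.fst hxy
    omega
  have hcount : (B ×ˢ B).card =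
      ∑ k ∈ B⁻¹ * B, ((B ×ˢ B).filter (fun p => p.2⁻¹ * p.1 = k)).card := by
    apply Finset.card_eq_sum_card_fiberwise
    intro p hp
    rw [Finset.mem_coe, Finset.mem_product] at hp
    exact Finset.mul_mem_mul (Finset.inv_mem_inv hp.2) hp.1
  have hle : (B⁻¹ * B).card * (B.card + 1) ≤ 2 * (B.card * B.card) := by
    calc (B⁻¹ * B).card * (B.card + 1)
        = ∑ _k ∈ B⁻¹ * B, (B.card + 1) := by rw [Finset.sum_const, smul_eq_mul]
      _ ≤ ∑ k ∈ B⁻¹ * B, 2 * ((B ×ˢ B).filter (fun p => p.2⁻¹ * p.1 = k)).card :=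
          Finset.sum_le_sum hfib
      _ = 2 * ∑ k ∈ B⁻¹ * B, ((B ×ˢ B).filter (fun p => p.2⁻¹ * p.1 = k)).card := by
          rw [Finset.mul_sum]
      _ = 2 * (B ×ˢ B).card := by rw [← hcount]
      _ = 2 * (B.card * B.card) := by rw [Finset.card_product]
  nlinarith [hB.card_pos, hle]

theorem freiman_three_halves {Γ : Type*} [Group Γ] [DecidableEq Γ]
    (B : Finset Γ) (hB : B.Nonempty) (h : 2 * (B * B⁻¹).card < 3 * B.card) :
    (∃ H : Subgroup Γ, ((B * B⁻¹ : Finset Γ) : Set Γ) = (H : Set Γ)) ∧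
    (∃ K : Subgroup Γ, ((B⁻¹ * B : Finset Γ) : Set Γ) = (K : Set Γ)) := by
  obtain ⟨b0, hb0⟩ := hB
  -- Facts about K = B⁻¹ * B
  have hKone : (1 : Γ) ∈ B⁻¹ * B := by
    rw [Finset.mem_mul]
    exact ⟨b0⁻¹, Finset.inv_mem_inv hb0, b0, hb0, inv_mul_cancel b0⟩
  have hKinv : ∀ g ∈ B⁻¹ * B, g⁻¹ ∈ B⁻¹ * B := by
    intro g hg
    rw [Finset.mem_mul] at hg
    obtain ⟨u, hu, a, ha, rfl⟩ := hg
    rw [Finset.mem_inv] at hu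
    obtain ⟨b, hb, rfl⟩ := hu
    rw [Finset.mem_mul]
    exact ⟨a⁻¹, Finset.inv_mem_inv ha, b, hb, by group⟩
  have hKmul : ∀ g ∈ B⁻¹ * B, ∀ k ∈ B⁻¹ * B, g * k ∈ B⁻¹ * B := by
    intro g hg k hk
    have := fh_Kdiv B h hg (hKinv k hk)
    simpa using this
  have hKcard : (B⁻¹ * B).card < 2 * B.card := fh_Kcard B ⟨b0, hb0⟩ h
  -- Facts about H = B * B⁻¹
  have hHone : (1 : Γ) ∈ B * B⁻¹ := by
    rw [Finset.mem_mul]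
    exact ⟨b0, hb0, b0⁻¹, Finset.inv_mem_inv hb0, mul_inv_cancel b0⟩
  have hHinv : ∀ g ∈ B * B⁻¹, g⁻¹ ∈ B * B⁻¹ := by
    intro g hg
    rw [Finset.mem_mul] at hg
    obtain ⟨a, ha, u, hu, rfl⟩ := hg
    rw [Finset.mem_inv] at hu
    obtain ⟨b, hb, rfl⟩ := hu
    rw [Finset.mem_mul]
    exact ⟨b, hb, a⁻¹, Finset.inv_mem_inv ha, by group⟩
  have hHmul : ∀ g ∈ B * B⁻¹, ∀ k ∈ B * B⁻¹, g * k ∈ B * B⁻¹ := by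
    intro g hg k hk
    rw [Finset.mem_mul] at hg hk
    obtain ⟨a, ha, u, hu, rfl⟩ := hg
    rw [Finset.mem_inv] at hu
    obtain ⟨b, hb, rfl⟩ := hu
    obtain ⟨c, hc, w, hw, rfl⟩ := hk
    rw [Finset.mem_inv] at hw
    obtain ⟨d, hd, rfl⟩ := hw
    set S := B.image (fun v => (b⁻¹ * c * d⁻¹) * v) with hSdef
    set T := B.image (fun v => a⁻¹ * v) with hTdef
    have hSsub : S ⊆ B⁻¹ * B := by
      intro x hx
      rw [hSdef, Finset.mem_image] at hx
      obtain ⟨v, hv, rfl⟩ := hx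
      have h1 : b⁻¹ * c ∈ B⁻¹ * B := Finset.mul_mem_mul (Finset.inv_mem_inv hb) hc
      have h2 : d⁻¹ * v ∈ B⁻¹ * B := Finset.mul_mem_mul (Finset.inv_mem_inv hd) hv
      have := hKmul _ h1 _ h2
      simpa [mul_assoc] using this
    have hTsub : T ⊆ B⁻¹ * B := by
      intro x hx
      rw [hTdef, Finset.mem_image] at hx
      obtain ⟨v, hv, rfl⟩ := hx
      exact Finset.mul_mem_mul (Finset.inv_mem_inv ha) hv
    have hScard : S.card = B.card := Finset.card_image_of_injective _ (mul_right_injective _)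
    have hTcard : T.card = B.card := Finset.card_image_of_injective _ (mul_right_injective _)
    have h1 : (S ∪ T).card ≤ (B⁻¹ * B).card :=
      Finset.card_le_card (Finset.union_subset hSsub hTsub)
    have h2 : (S ∪ T).card + (S ∩ T).card = S.card + T.card :=
      Finset.card_union_add_card_inter _ _
    have h3 : 0 < (S ∩ T).card := by omega
    obtain ⟨z, hz⟩ := Finset.card_pos.mp h3
    rw [Finset.mem_inter] at hz
    obtain ⟨hzS, hzT⟩ := hz
    rw [hSdef, Finset.mem_image] at hzS
    obtain ⟨v, hv, hvz⟩ := hzS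
    rw [hTdef, Finset.mem_image] at hzT
    obtain ⟨u, hu, huz⟩ := hzT
    rw [Finset.mem_mul]
    refine ⟨u, hu, v⁻¹, Finset.inv_mem_inv hv, ?_⟩
    have he : a⁻¹ * u = b⁻¹ * c * d⁻¹ * v := by rw [huz, hvz]
    have hu' : u = a * (b⁻¹ * c * d⁻¹ * v) := by rw [← he]; group
    rw [hu']; group
  constructor
  · exact ⟨{ carrier := ↑(B * B⁻¹),
             mul_mem' := fun {x y} hx hy =>
               Finset.mem_coe.mpr (hHmul x (Finset.mem_coe.mp hx) y (Finset.mem_coe.mp hy)),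
             one_mem' := Finset.mem_coe.mpr hHone,
             inv_mem' := fun {x} hx => Finset.mem_coe.mpr (hHinv x (Finset.mem_coe.mp hx)) },
           rfl⟩
  · exact ⟨{ carrier := ↑(B⁻¹ * B),
             mul_mem' := fun {x y} hx hy =>
               Finset.mem_coe.mpr (hKmul x (Finset.mem_coe.mp hx) y (Finset.mem_coe.mp hy)),
             one_mem' := Finset.mem_coe.mpr hKone,
             inv_mem' := fun {x} hx => Finset.mem_coe.mpr (hKinv x (Finset.mem_coe.mp hx)) },
           rfl⟩
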